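/- Let Φ be a point process with σ-finite moment measure M_Φ and Palm kernel {P^x_Φ}. For all measurable f, g : 𝕏 → ℝ≥0 with g integrable with respect to M_Φ, the derivative of the Laplace functional satisfies ∂/∂t L_Φ(f + t g)|_{t=0} = − ∫_𝕏 g(x) L_{Φ_x}(f) M_Φ(dx), where L_{Φ_x}(f) = ∫ exp(−μ(f)) P^x_Φ(dμ). -/

import Mathlib

open MeasureTheory ProbabilityTheory ENNReal Set

/-- `negExp a = e^{-a}`, with the convention `e^{-∞} = 0`. -/
noncomputable def negExp (a : ℝ≥0∞) : ℝ≥0∞ :=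
  if a = ∞ then 0 else ENNReal.ofReal (Real.exp (-a.toReal))

lemma negExp_le_one (a : ℝ≥0∞) : negExp a ≤ 1 := by
  unfold negExp
  split
  · exact zero_le_one
  · rw [← ENNReal.ofReal_one]
    exact ENNReal.ofReal_le_ofReal (Real.exp_le_one_iff.mpr (neg_nonpos.mpr ENNReal.toReal_nonneg))

lemma measurable_negExp : Measurable negExp := by
  unfold negExp
  exact Measurable.ite (by simpa using measurableSet_singleton (∞ : ℝ≥0∞)) measurable_const
    (ENNReal.measurable_ofReal.comp (Real.measurable_exp.comp ENNReal.measurable_toReal.neg))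

section Campbell

variable {Ω 𝕏 : Type*} [MeasurableSpace Ω] [MeasurableSpace 𝕏]
  (P : Measure Ω) (Φ : Ω → Measure 𝕏)
  (M : Measure 𝕏) (K : 𝕏 → Measure (Measure 𝕏))

lemma lintegral_intensity (hΦ : Measurable Φ)
    (hM : ∀ B, MeasurableSet B → M B = ∫⁻ ω, Φ ω B ∂P)
    {q : 𝕏 → ℝ≥0∞} (hq : Measurable q) :
    ∫⁻ x, q x ∂M = ∫⁻ ω, ∫⁻ x, q x ∂(Φ ω) ∂P := by
  have hbind : M = P.bind Φ := by
    refine Measure.ext fun B hB => ?_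
    rw [hM B hB, Measure.bind_apply hB hΦ.aemeasurable]
  rw [hbind, Measure.lintegral_bind hΦ.aemeasurable hq.aemeasurable]

lemma claim1 (hΦ : Measurable Φ)
    (hK : ∀ B, MeasurableSet B → ∀ L : Set (Measure 𝕏), MeasurableSet L →
      ∫⁻ ω, Φ ω B * L.indicator (1 : Measure 𝕏 → ℝ≥0∞) (Φ ω) ∂P
        = ∫⁻ x in B, K x L ∂M)
    {L : Set (Measure 𝕏)} (hL : MeasurableSet L)
    {q : 𝕏 → ℝ≥0∞} (hq : Measurable q) :
    ∫⁻ ω, (∫⁻ x, q x ∂(Φ ω)) * L.indicator (1 : Measure 𝕏 → ℝ≥0∞) (Φ ω) ∂P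
      ≤ ∫⁻ x, q x * K x L ∂M := by
  have hindm : Measurable fun ω => L.indicator (1 : Measure 𝕏 → ℝ≥0∞) (Φ ω) :=
    (measurable_one.indicator hL).comp hΦ
  refine Measurable.ennreal_induction (motive := fun q => ∫⁻ ω, (∫⁻ x, q x ∂(Φ ω)) * L.indicator (1 : Measure 𝕏 → ℝ≥0∞) (Φ ω) ∂P ≤ ∫⁻ x, q x * K x L ∂M) ?_ ?_ ?_ hq
  · intro c s hs
    have h1 : ∀ ω, (∫⁻ x, s.indicator (fun _ => c) x ∂(Φ ω)) = c * Φ ω s := fun ω =>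
      lintegral_indicator_const hs c
    calc ∫⁻ ω, (∫⁻ x, s.indicator (fun _ => c) x ∂(Φ ω))
            * L.indicator (1 : Measure 𝕏 → ℝ≥0∞) (Φ ω) ∂P
        = c * ∫⁻ ω, Φ ω s * L.indicator (1 : Measure 𝕏 → ℝ≥0∞) (Φ ω) ∂P := by
          have hm : Measurable fun ω => Φ ω s * L.indicator (1 : Measure 𝕏 → ℝ≥0∞) (Φ ω) :=
            ((Measure.measurable_coe hs).comp hΦ).mul hindm
          rw [← lintegral_const_mul c hm]
          exact lintegral_congr fun ω => by rw [h1 ω]; ring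
      _ = c * ∫⁻ x, s.indicator (fun x => K x L) x ∂M := by
          rw [hK s hs L hL, lintegral_indicator hs]
      _ ≤ ∫⁻ x, c * s.indicator (fun x => K x L) x ∂M := lintegral_const_mul_le _ _
      _ = ∫⁻ x, s.indicator (fun _ => c) x * K x L ∂M := by
          refine lintegral_congr fun x => ?_
          by_cases hx : x ∈ s <;> simp [hx]
  · intro q₁ q₂ hdisj hq₁ hq₂ ih₁ ih₂
    have hm₁ : Measurable fun ω => (∫⁻ x, q₁ x ∂(Φ ω))
        * L.indicator (1 : Measure 𝕏 → ℝ≥0∞) (Φ ω) :=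
      ((Measure.measurable_lintegral hq₁).comp hΦ).mul hindm
    calc ∫⁻ ω, (∫⁻ x, (q₁ + q₂) x ∂(Φ ω)) * L.indicator (1 : Measure 𝕏 → ℝ≥0∞) (Φ ω) ∂P
        = ∫⁻ ω, (∫⁻ x, q₁ x ∂(Φ ω)) * L.indicator (1 : Measure 𝕏 → ℝ≥0∞) (Φ ω)
            + (∫⁻ x, q₂ x ∂(Φ ω)) * L.indicator (1 : Measure 𝕏 → ℝ≥0∞) (Φ ω) ∂P := by
          refine lintegral_congr fun ω => ?_
          simp only [Pi.add_apply]
          rw [lintegral_add_left hq₁, add_mul]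
      _ = (∫⁻ ω, (∫⁻ x, q₁ x ∂(Φ ω)) * L.indicator (1 : Measure 𝕏 → ℝ≥0∞) (Φ ω) ∂P)
            + ∫⁻ ω, (∫⁻ x, q₂ x ∂(Φ ω)) * L.indicator (1 : Measure 𝕏 → ℝ≥0∞) (Φ ω) ∂P :=
          lintegral_add_left hm₁ _
      _ ≤ (∫⁻ x, q₁ x * K x L ∂M) + ∫⁻ x, q₂ x * K x L ∂M := add_le_add ih₁ ih₂
      _ ≤ ∫⁻ x, q₁ x * K x L + q₂ x * K x L ∂M := le_lintegral_add _ _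
      _ = ∫⁻ x, (q₁ + q₂) x * K x L ∂M := lintegral_congr fun x => by
          simp [add_mul]
  · intro qn hqn hmono ih
    have hmeas : ∀ n, Measurable fun ω => (∫⁻ x, qn n x ∂(Φ ω))
        * L.indicator (1 : Measure 𝕏 → ℝ≥0∞) (Φ ω) := fun n =>
      ((Measure.measurable_lintegral (hqn n)).comp hΦ).mul hindm
    calc ∫⁻ ω, (∫⁻ x, ⨆ n, qn n x ∂(Φ ω)) * L.indicator (1 : Measure 𝕏 → ℝ≥0∞) (Φ ω) ∂P
        = ∫⁻ ω, ⨆ n, (∫⁻ x, qn n x ∂(Φ ω)) * L.indicator (1 : Measure 𝕏 → ℝ≥0∞) (Φ ω) ∂P := by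
          refine lintegral_congr fun ω => ?_
          rw [lintegral_iSup hqn hmono, ENNReal.iSup_mul]
      _ = ⨆ n, ∫⁻ ω, (∫⁻ x, qn n x ∂(Φ ω)) * L.indicator (1 : Measure 𝕏 → ℝ≥0∞) (Φ ω) ∂P := by
          refine lintegral_iSup hmeas fun i j hij ω => ?_
          exact mul_le_mul_left (lintegral_mono fun x => hmono hij x) _
      _ ≤ ⨆ n, ∫⁻ x, qn n x * K x L ∂M := iSup_mono ih
      _ ≤ ∫⁻ x, (⨆ n, qn n x) * K x L ∂M := by
          refine iSup_le fun n => lintegral_mono fun x => ?_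
          exact mul_le_mul_left (le_iSup (fun n => qn n x) n) _

lemma claim2 (hΦ : Measurable Φ)
    (hK : ∀ B, MeasurableSet B → ∀ L : Set (Measure 𝕏), MeasurableSet L →
      ∫⁻ ω, Φ ω B * L.indicator (1 : Measure 𝕏 → ℝ≥0∞) (Φ ω) ∂P
        = ∫⁻ x in B, K x L ∂M)
    {g : 𝕏 → ℝ≥0∞} (hg : Measurable g)
    {h : Measure 𝕏 → ℝ≥0∞} (hh : Measurable h) :
    ∫⁻ ω, (∫⁻ x, g x ∂(Φ ω)) * h (Φ ω) ∂P
      ≤ ∫⁻ x, g x * (∫⁻ μ, h μ ∂(K x)) ∂M := by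
  have hG : Measurable fun ω => ∫⁻ x, g x ∂(Φ ω) :=
    (Measure.measurable_lintegral hg).comp hΦ
  refine Measurable.ennreal_induction
    (motive := fun h => ∫⁻ ω, (∫⁻ x, g x ∂(Φ ω)) * h (Φ ω) ∂P
      ≤ ∫⁻ x, g x * (∫⁻ μ, h μ ∂(K x)) ∂M) ?_ ?_ ?_ hh
  · intro c L hL
    calc ∫⁻ ω, (∫⁻ x, g x ∂(Φ ω)) * L.indicator (fun _ => c) (Φ ω) ∂P
        = c * ∫⁻ ω, (∫⁻ x, g x ∂(Φ ω)) * L.indicator (1 : Measure 𝕏 → ℝ≥0∞) (Φ ω) ∂P := by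
          have hm : Measurable fun ω =>
              (∫⁻ x, g x ∂(Φ ω)) * L.indicator (1 : Measure 𝕏 → ℝ≥0∞) (Φ ω) :=
            hG.mul ((measurable_one.indicator hL).comp hΦ)
          rw [← lintegral_const_mul c hm]
          refine lintegral_congr fun ω => ?_
          by_cases hω : Φ ω ∈ L <;> simp [hω] <;> ring
      _ ≤ c * ∫⁻ x, g x * K x L ∂M :=
          mul_le_mul_right (claim1 P Φ M K hΦ hK hL hg) c
      _ ≤ ∫⁻ x, c * (g x * K x L) ∂M := lintegral_const_mul_le _ _
      _ = ∫⁻ x, g x * (∫⁻ μ, L.indicator (fun _ => c) μ ∂(K x)) ∂M := by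
          refine lintegral_congr fun x => ?_
          rw [lintegral_indicator_const hL]
          ring
  · intro h₁ h₂ hdisj hh₁ hh₂ ih₁ ih₂
    calc ∫⁻ ω, (∫⁻ x, g x ∂(Φ ω)) * (h₁ + h₂) (Φ ω) ∂P
        = (∫⁻ ω, (∫⁻ x, g x ∂(Φ ω)) * h₁ (Φ ω) ∂P)
            + ∫⁻ ω, (∫⁻ x, g x ∂(Φ ω)) * h₂ (Φ ω) ∂P := by
          have hm : Measurable fun ω => (∫⁻ x, g x ∂(Φ ω)) * h₁ (Φ ω) :=
            hG.mul (hh₁.comp hΦ)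
          rw [← lintegral_add_left hm]
          refine lintegral_congr fun ω => ?_
          simp only [Pi.add_apply]; ring
      _ ≤ (∫⁻ x, g x * (∫⁻ μ, h₁ μ ∂(K x)) ∂M)
            + ∫⁻ x, g x * (∫⁻ μ, h₂ μ ∂(K x)) ∂M := add_le_add ih₁ ih₂
      _ ≤ ∫⁻ x, g x * (∫⁻ μ, h₁ μ ∂(K x)) + g x * (∫⁻ μ, h₂ μ ∂(K x)) ∂M :=
          le_lintegral_add _ _
      _ = ∫⁻ x, g x * (∫⁻ μ, (h₁ + h₂) μ ∂(K x)) ∂M := by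
          refine lintegral_congr fun x => ?_
          simp only [Pi.add_apply]
          rw [lintegral_add_left hh₁]
          ring
  · intro hn hhn hmono ih
    calc ∫⁻ ω, (∫⁻ x, g x ∂(Φ ω)) * (⨆ n, hn n (Φ ω)) ∂P
        = ∫⁻ ω, ⨆ n, (∫⁻ x, g x ∂(Φ ω)) * hn n (Φ ω) ∂P := by
          refine lintegral_congr fun ω => ?_
          rw [ENNReal.mul_iSup]
      _ = ⨆ n, ∫⁻ ω, (∫⁻ x, g x ∂(Φ ω)) * hn n (Φ ω) ∂P := by
          refine lintegral_iSup (fun n => hG.mul ((hhn n).comp hΦ))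
            (fun i j hij ω => mul_le_mul_right (hmono hij _) _)
      _ ≤ ⨆ n, ∫⁻ x, g x * (∫⁻ μ, hn n μ ∂(K x)) ∂M := iSup_mono ih
      _ ≤ ∫⁻ x, g x * (∫⁻ μ, ⨆ n, hn n μ ∂(K x)) ∂M := by
          refine iSup_le fun n => lintegral_mono fun x => ?_
          exact mul_le_mul_right (lintegral_mono fun μ => le_iSup (fun n => hn n μ) n) _

lemma nugget [SigmaFinite M]
    (hKuniv : ∀ B : Set 𝕏, MeasurableSet B → ∫⁻ x in B, K x Set.univ ∂M = M B)
    {g : 𝕏 → ℝ≥0∞} (hg : Measurable g) (hgint : ∫⁻ x, g x ∂M ≠ ∞) :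
    ∫⁻ x, g x * K x Set.univ ∂M ≤ ∫⁻ x, g x ∂M := by
  -- any measurable set inside `{c ≤ K x univ}` with `1 < c` is null
  have hnull : ∀ (c : ℝ≥0∞), 1 < c → ∀ E : Set 𝕏, MeasurableSet E →
      (E ⊆ {x | c ≤ K x Set.univ}) → M E = 0 := by
    intro c hc E hE hsub
    have hn : ∀ n, M (E ∩ spanningSets M n) = 0 := by
      intro n
      set En := E ∩ spanningSets M n with hEn
      have hEnm : MeasurableSet En := hE.inter (measurableSet_spanningSets M n)
      have hfin : M En < ∞ :=
        (measure_mono inter_subset_right).trans_lt (measure_spanningSets_lt_top M n)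
      have h1 : c * M En ≤ M En := by
        calc c * M En = ∫⁻ x in En, En.indicator (fun _ => c) x ∂M := by
              rw [lintegral_indicator hEnm, setLIntegral_const, Measure.restrict_apply_self]
          _ ≤ ∫⁻ x in En, K x Set.univ ∂M := by
              refine lintegral_mono fun x => ?_
              by_cases hx : x ∈ En
              · simpa [hx] using hsub (hEn ▸ hx).1
              · simp [hx]
          _ = M En := hKuniv En hEnm
      by_contra h0
      have : (1 : ℝ≥0∞) * M En < c * M En :=
        ENNReal.mul_lt_mul_left h0 hfin.ne hc
      rw [one_mul] at this
      exact absurd h1 (not_le.mpr this)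
    have hcover : E = ⋃ n, E ∩ spanningSets M n := by
      rw [← inter_iUnion, iUnion_spanningSets, inter_univ]
    rw [hcover]
    exact measure_iUnion_null hn
  -- each measurable minorant has small integral
  rw [← iSup_lintegral_measurable_le_eq_lintegral (fun x => g x * K x Set.univ)]
  refine iSup_le fun ψ => iSup_le fun hψ => iSup_le fun hψle => ?_
  have key : ∀ (c : ℝ≥0∞), 1 < c → c ≠ ∞ → ∫⁻ x, ψ x ∂M ≤ c * ∫⁻ x, g x ∂M := by
    intro c hc hcne
    have hD : MeasurableSet {x | c * g x < ψ x} :=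
      measurableSet_lt (measurable_const.mul hg) hψ
    have hDnull : M {x | c * g x < ψ x} = 0 := by
      refine hnull c hc _ hD fun x hx => ?_
      simp only [mem_setOf_eq] at hx ⊢
      have hgx0 : g x ≠ 0 := by
        intro h0
        have h1 : ψ x = 0 := le_zero_iff.mp (by simpa [h0] using hψle x)
        simp [h0, h1] at hx
      have hgtop : g x ≠ ∞ := by
        rintro htop
        rw [htop, ENNReal.mul_top (by positivity)] at hx
        exact absurd hx (not_lt.mpr le_top)
      have h2 : c * g x < K x Set.univ * g x := by
        calc c * g x < ψ x := hx
          _ ≤ g x * K x Set.univ := hψle x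
          _ = K x Set.univ * g x := mul_comm _ _
      exact ((ENNReal.mul_left_strictMono hgx0 hgtop).lt_iff_lt.mp h2).le
    have hae : ψ ≤ᵐ[M] fun x => c * g x := by
      filter_upwards [measure_eq_zero_iff_ae_notMem.mp hDnull] with x hx
      simpa using not_lt.mp hx
    calc ∫⁻ x, ψ x ∂M ≤ ∫⁻ x, c * g x ∂M := lintegral_mono_ae hae
      _ = c * ∫⁻ x, g x ∂M := lintegral_const_mul c hg
  rcases eq_or_ne (∫⁻ x, g x ∂M) 0 with h0 | h0
  · simpa [h0] using key 2 one_lt_two (by norm_num)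
  refine ENNReal.le_of_forall_pos_le_add fun ε hε hlt => ?_
  have hc1 : (1 : ℝ≥0∞) < 1 + (ε : ℝ≥0∞) / ∫⁻ x, g x ∂M := by
    refine ENNReal.lt_add_right one_ne_top ?_
    exact (ENNReal.div_pos (by exact_mod_cast hε.ne') hgint).ne'
  have hcne : 1 + (ε : ℝ≥0∞) / ∫⁻ x, g x ∂M ≠ ∞ := by
    refine ENNReal.add_ne_top.mpr ⟨one_ne_top, ?_⟩
    exact (ENNReal.div_lt_top coe_ne_top h0).ne
  calc ∫⁻ x, ψ x ∂M ≤ (1 + (ε : ℝ≥0∞) / ∫⁻ x, g x ∂M) * ∫⁻ x, g x ∂M := key _ hc1 hcne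
    _ = ∫⁻ x, g x ∂M + ε := by
        rw [add_mul, one_mul, ENNReal.div_mul_cancel h0 hgint]

lemma campbell [SigmaFinite M] [IsProbabilityMeasure P] (hΦ : Measurable Φ)
    (hM : ∀ B, MeasurableSet B → M B = ∫⁻ ω, Φ ω B ∂P)
    (hK : ∀ B, MeasurableSet B → ∀ L : Set (Measure 𝕏), MeasurableSet L →
      ∫⁻ ω, Φ ω B * L.indicator (1 : Measure 𝕏 → ℝ≥0∞) (Φ ω) ∂P
        = ∫⁻ x in B, K x L ∂M)
    {g : 𝕏 → ℝ≥0∞} (hg : Measurable g) (hgint : ∫⁻ x, g x ∂M ≠ ∞)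
    {h : Measure 𝕏 → ℝ≥0∞} (hh : Measurable h) (hh1 : ∀ μ, h μ ≤ 1) :
    ∫⁻ x, g x * (∫⁻ μ, h μ ∂(K x)) ∂M
      = ∫⁻ ω, (∫⁻ x, g x ∂(Φ ω)) * h (Φ ω) ∂P := by
  have hG : Measurable fun ω => ∫⁻ x, g x ∂(Φ ω) :=
    (Measure.measurable_lintegral hg).comp hΦ
  set h' : Measure 𝕏 → ℝ≥0∞ := fun μ => 1 - h μ with hh'def
  have hh' : Measurable h' := measurable_const.sub hh
  have hsum : ∀ μ, h μ + h' μ = 1 := fun μ => by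
    rw [hh'def]; exact add_tsub_cancel_of_le (hh1 μ)
  -- total mass identities
  have htotal : ∫⁻ ω, (∫⁻ x, g x ∂(Φ ω)) ∂P = ∫⁻ x, g x ∂M :=
    (lintegral_intensity P Φ M hΦ hM hg).symm
  have hS : (∫⁻ ω, (∫⁻ x, g x ∂(Φ ω)) * h (Φ ω) ∂P)
      + (∫⁻ ω, (∫⁻ x, g x ∂(Φ ω)) * h' (Φ ω) ∂P) = ∫⁻ x, g x ∂M := by
    have hm : Measurable fun ω => (∫⁻ x, g x ∂(Φ ω)) * h (Φ ω) :=
      hG.mul (hh.comp hΦ)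
    rw [← lintegral_add_left hm]
    rw [← htotal]
    refine lintegral_congr fun ω => ?_
    rw [← mul_add, hsum, mul_one]
  have hKuniv : ∀ B : Set 𝕏, MeasurableSet B → ∫⁻ x in B, K x Set.univ ∂M = M B := by
    intro B hB
    rw [← hK B hB Set.univ MeasurableSet.univ]
    rw [hM B hB]
    exact lintegral_congr fun ω => by simp
  have hT : (∫⁻ x, g x * (∫⁻ μ, h μ ∂(K x)) ∂M)
      + (∫⁻ x, g x * (∫⁻ μ, h' μ ∂(K x)) ∂M) ≤ ∫⁻ x, g x ∂M := by
    calc (∫⁻ x, g x * (∫⁻ μ, h μ ∂(K x)) ∂M)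
          + (∫⁻ x, g x * (∫⁻ μ, h' μ ∂(K x)) ∂M)
        ≤ ∫⁻ x, g x * (∫⁻ μ, h μ ∂(K x)) + g x * (∫⁻ μ, h' μ ∂(K x)) ∂M :=
          le_lintegral_add _ _
      _ = ∫⁻ x, g x * K x Set.univ ∂M := by
          refine lintegral_congr fun x => ?_
          rw [← mul_add, ← lintegral_add_left hh]
          congr 1
          calc ∫⁻ μ, h μ + h' μ ∂(K x) = ∫⁻ _, (1 : ℝ≥0∞) ∂(K x) :=
                lintegral_congr fun μ => hsum μ
            _ = K x Set.univ := lintegral_one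
      _ ≤ ∫⁻ x, g x ∂M := nugget M K hKuniv hg hgint
  have hle₁ := claim2 P Φ M K hΦ hK hg hh
  have hle₂ := claim2 P Φ M K hΦ hK hg hh'
  have hS'fin : (∫⁻ ω, (∫⁻ x, g x ∂(Φ ω)) * h' (Φ ω) ∂P) ≠ ∞ := by
    intro htop
    rw [htop, add_top] at hS
    exact hgint hS.symm
  refine le_antisymm ?_ hle₁
  have hchain : (∫⁻ x, g x * (∫⁻ μ, h μ ∂(K x)) ∂M)
      + (∫⁻ ω, (∫⁻ x, g x ∂(Φ ω)) * h' (Φ ω) ∂P)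
      ≤ (∫⁻ ω, (∫⁻ x, g x ∂(Φ ω)) * h (Φ ω) ∂P)
      + (∫⁻ ω, (∫⁻ x, g x ∂(Φ ω)) * h' (Φ ω) ∂P) := by
    calc _ ≤ (∫⁻ x, g x * (∫⁻ μ, h μ ∂(K x)) ∂M)
            + (∫⁻ x, g x * (∫⁻ μ, h' μ ∂(K x)) ∂M) := add_le_add le_rfl hle₂
      _ ≤ ∫⁻ x, g x ∂M := hT
      _ = _ := hS.symm
  exact (ENNReal.add_le_add_iff_right hS'fin).mp hchain

end Campbell

lemma negExp_top : negExp ∞ = 0 := by simp [negExp]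

lemma negExp_toReal (x : ℝ≥0∞) (hx : x ≠ ∞) :
    (negExp x).toReal = Real.exp (-x.toReal) := by
  simp [negExp, hx, ENNReal.toReal_ofReal (Real.exp_pos _).le]

lemma exp_slope_bound {a b t : ℝ} (ha : 0 ≤ a) (hb : 0 ≤ b) (ht : 0 < t) :
    |(Real.exp (-(a + t * b)) - Real.exp (-a)) / t| ≤ b := by
  have h1 : Real.exp (-(a + t * b)) ≤ Real.exp (-a) :=
    Real.exp_le_exp.mpr (by nlinarith)
  have h2 : 1 - t * b ≤ Real.exp (-(t * b)) := by
    have := Real.add_one_le_exp (-(t * b)); linarith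
  have h3 : Real.exp (-(a + t * b)) = Real.exp (-a) * Real.exp (-(t * b)) := by
    rw [← Real.exp_add]; ring_nf
  have h4 : Real.exp (-a) ≤ 1 := Real.exp_le_one_iff.mpr (by linarith)
  have h5 : (0:ℝ) < Real.exp (-a) := Real.exp_pos _
  rw [abs_div, abs_of_pos ht, abs_of_nonpos (by linarith), div_le_iff₀ ht]
  nlinarith [mul_le_mul_of_nonneg_left h2 h5.le, mul_nonneg ht.le hb]

lemma exp_hasDerivAt (a b : ℝ) :
    HasDerivAt (fun t : ℝ => Real.exp (-(a + t * b))) (-(b * Real.exp (-a))) 0 := by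
  have h1 : HasDerivAt (fun t : ℝ => -(a + t * b)) (-b) 0 := by
    have h := ((hasDerivAt_id (0 : ℝ)).mul_const (-b)).const_add (-a)
    simp only [id_eq, one_mul] at h
    refine h.congr_of_eventuallyEq (Filter.Eventually.of_forall fun t => ?_)
    ring
  have h2 := h1.exp
  convert h2 using 1
  rw [zero_mul, add_zero]
  ring


/-- Characterization of the Palm kernel via the derivative of the
Laplace functional: `∂/∂t L_Φ(f + t g)|_{t=0} = −∫ g(x) L_{Φ_x}(f) M_Φ(dx)`
(one-sided derivative at `t = 0`, since `f + tg ≥ 0` requires `t ≥ 0`). -/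
theorem laplace_deriv_palm
    {Ω 𝕏 : Type*} [MeasurableSpace Ω] [MetricSpace 𝕏] [CompleteSpace 𝕏]
    [TopologicalSpace.SeparableSpace 𝕏] [MeasurableSpace 𝕏] [BorelSpace 𝕏]
    (P : Measure Ω) [IsProbabilityMeasure P]
    (Φ : Ω → Measure 𝕏) (hΦ : Measurable Φ)
    (M : Measure 𝕏) [SigmaFinite M]
    (hM : ∀ B, MeasurableSet B → M B = ∫⁻ ω, Φ ω B ∂P)
    (K : 𝕏 → Measure (Measure 𝕏))
    (hK : ∀ B, MeasurableSet B → ∀ L : Set (Measure 𝕏), MeasurableSet L →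
      ∫⁻ ω, Φ ω B * L.indicator (1 : Measure 𝕏 → ℝ≥0∞) (Φ ω) ∂P
        = ∫⁻ x in B, K x L ∂M)
    (f g : 𝕏 → ℝ≥0∞) (hf : Measurable f) (hg : Measurable g)
    (hgint : ∫⁻ x, g x ∂M ≠ ∞) :
    HasDerivWithinAt
      (fun t : ℝ =>
        (∫⁻ ω, negExp (∫⁻ x, (f x + ENNReal.ofReal t * g x) ∂(Φ ω)) ∂P).toReal)
      (-(∫⁻ x, g x * (∫⁻ μ, negExp (∫⁻ y, f y ∂μ) ∂(K x)) ∂M).toReal)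
      (Set.Ici (0 : ℝ)) 0 := by
  set A : Ω → ℝ≥0∞ := fun ω => ∫⁻ x, f x ∂(Φ ω) with hAdef
  set B : Ω → ℝ≥0∞ := fun ω => ∫⁻ x, g x ∂(Φ ω) with hBdef
  have hA : Measurable A := (Measure.measurable_lintegral hf).comp hΦ
  have hB : Measurable B := (Measure.measurable_lintegral hg).comp hΦ
  have hBint : ∫⁻ ω, B ω ∂P ≠ ∞ := by
    rw [hBdef, ← lintegral_intensity P Φ M hΦ hM hg]
    exact hgint
  have hhmeas : Measurable fun μ : Measure 𝕏 => negExp (∫⁻ y, f y ∂μ) :=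
    measurable_negExp.comp (Measure.measurable_lintegral hf)
  have key : ∫⁻ x, g x * (∫⁻ μ, negExp (∫⁻ y, f y ∂μ) ∂(K x)) ∂M
      = ∫⁻ ω, B ω * negExp (A ω) ∂P :=
    campbell P Φ M K hΦ hM hK hg hgint hhmeas (fun μ => negExp_le_one _)
  have hfun : (fun t : ℝ =>
        (∫⁻ ω, negExp (∫⁻ x, (f x + ENNReal.ofReal t * g x) ∂(Φ ω)) ∂P).toReal)
      = fun t : ℝ => (∫⁻ ω, negExp (A ω + ENNReal.ofReal t * B ω) ∂P).toReal := by
    funext t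
    congr 1
    refine lintegral_congr fun ω => ?_
    rw [lintegral_add_left hf, lintegral_const_mul _ hg]
  rw [hfun, key]
  have hφmeas : ∀ t : ℝ, Measurable fun ω => negExp (A ω + ENNReal.ofReal t * B ω) :=
    fun t => measurable_negExp.comp (hA.add (hB.const_mul _))
  have hl : ∀ t : ℝ, (∫⁻ ω, negExp (A ω + ENNReal.ofReal t * B ω) ∂P).toReal
      = ∫ ω, (negExp (A ω + ENNReal.ofReal t * B ω)).toReal ∂P := fun t =>
    (integral_toReal (hφmeas t).aemeasurable
      (ae_of_all _ fun ω => (negExp_le_one _).trans_lt ENNReal.one_lt_top)).symm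
  have hφint : ∀ t : ℝ,
      Integrable (fun ω => (negExp (A ω + ENNReal.ofReal t * B ω)).toReal) P := by
    intro t
    refine Integrable.mono' (integrable_const 1)
      ((hφmeas t).ennreal_toReal).aestronglyMeasurable (ae_of_all _ fun ω => ?_)
    rw [Real.norm_eq_abs, abs_of_nonneg ENNReal.toReal_nonneg]
    calc (negExp (A ω + ENNReal.ofReal t * B ω)).toReal
        ≤ (1 : ℝ≥0∞).toReal := ENNReal.toReal_mono one_ne_top (negExp_le_one _)
      _ = 1 := ENNReal.toReal_one
  have h00 : ∀ ω, A ω + ENNReal.ofReal (0:ℝ) * B ω = A ω := fun ω => by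
    simp
  have hφ0int : Integrable (fun ω => (negExp (A ω)).toReal) P := by
    have := hφint 0
    simpa only [h00] using this
  have hDmeas : Measurable fun ω => B ω * negExp (A ω) :=
    hB.mul (measurable_negExp.comp hA)
  have hDfin : ∫⁻ ω, B ω * negExp (A ω) ∂P ≠ ∞ := by
    refine ne_top_of_le_ne_top hBint (lintegral_mono fun ω => ?_)
    calc B ω * negExp (A ω) ≤ B ω * 1 := mul_le_mul_right (negExp_le_one _) _
      _ = B ω := mul_one _
  have hDval : (∫⁻ ω, B ω * negExp (A ω) ∂P).toReal
      = ∫ ω, (B ω * negExp (A ω)).toReal ∂P :=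
    (integral_toReal hDmeas.aemeasurable (ae_lt_top hDmeas hDfin)).symm
  rw [hasDerivWithinAt_iff_tendsto_slope, Set.Ici_sdiff_left]
  have hBae : ∀ᵐ ω ∂P, B ω < ∞ := ae_lt_top hB hBint
  have hmain : Filter.Tendsto
      (fun t : ℝ => ∫ ω, ((negExp (A ω + ENNReal.ofReal t * B ω)).toReal
          - (negExp (A ω)).toReal) / t ∂P)
      (nhdsWithin (0:ℝ) (Set.Ioi 0))
      (nhds (∫ ω, -(B ω * negExp (A ω)).toReal ∂P)) := by
    refine tendsto_integral_filter_of_dominated_convergence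
      (fun ω => (B ω).toReal) ?_ ?_ ?_ ?_
    · refine Filter.Eventually.of_forall fun t => Measurable.aestronglyMeasurable ?_
      exact (((hφmeas t).ennreal_toReal).sub
        ((measurable_negExp.comp hA).ennreal_toReal)).div_const t
    · refine eventually_nhdsWithin_of_forall fun t ht => ?_
      have ht0 : (0:ℝ) < t := ht
      filter_upwards [hBae] with ω hω
      rw [Real.norm_eq_abs]
      by_cases hAω : A ω = ∞
      · have h1 : A ω + ENNReal.ofReal t * B ω = ∞ := by simp [hAω]
        simp [h1, hAω, negExp_top, ENNReal.toReal_nonneg]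
      · have hmul : ENNReal.ofReal t * B ω ≠ ∞ :=
          ENNReal.mul_ne_top ENNReal.ofReal_ne_top hω.ne
        have hsum : A ω + ENNReal.ofReal t * B ω ≠ ∞ := ENNReal.add_ne_top.mpr ⟨hAω, hmul⟩
        rw [negExp_toReal _ hsum, negExp_toReal _ hAω, ENNReal.toReal_add hAω hmul,
          ENNReal.toReal_mul, ENNReal.toReal_ofReal ht0.le]
        exact exp_slope_bound ENNReal.toReal_nonneg ENNReal.toReal_nonneg ht0
    · exact integrable_toReal_of_lintegral_ne_top hB.aemeasurable hBint
    · filter_upwards [hBae] with ω hω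
      by_cases hAω : A ω = ∞
      · have hz : ∀ t : ℝ, ((negExp (A ω + ENNReal.ofReal t * B ω)).toReal
            - (negExp (A ω)).toReal) / t = 0 := fun t => by
          simp [hAω, top_add, negExp_top]
        have hval0 : -(B ω * negExp (A ω)).toReal = 0 := by simp [hAω, negExp_top]
        rw [hval0]
        exact tendsto_const_nhds.congr fun t => (hz t).symm
      · have hd := exp_hasDerivAt (A ω).toReal (B ω).toReal
        have htend := (hasDerivAt_iff_tendsto_slope.mp hd).mono_left
          (nhdsWithin_mono _ fun x (hx : x ∈ Set.Ioi (0:ℝ)) => ne_of_gt hx)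
        have hvalue : -(B ω * negExp (A ω)).toReal
            = -((B ω).toReal * Real.exp (-(A ω).toReal)) := by
          rw [ENNReal.toReal_mul, negExp_toReal _ hAω]
        rw [hvalue]
        refine htend.congr' ?_
        filter_upwards [self_mem_nhdsWithin] with t (ht : t ∈ Set.Ioi (0:ℝ))
        have ht0 : (0:ℝ) < t := ht
        have hmul : ENNReal.ofReal t * B ω ≠ ∞ :=
          ENNReal.mul_ne_top ENNReal.ofReal_ne_top hω.ne
        have hsum : A ω + ENNReal.ofReal t * B ω ≠ ∞ := ENNReal.add_ne_top.mpr ⟨hAω, hmul⟩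
        rw [slope_def_field, negExp_toReal _ hsum, negExp_toReal _ hAω,
          ENNReal.toReal_add hAω hmul, ENNReal.toReal_mul,
          ENNReal.toReal_ofReal ht0.le, sub_zero, zero_mul, add_zero]
  have hval : ∫ ω, -(B ω * negExp (A ω)).toReal ∂P
      = -(∫⁻ ω, B ω * negExp (A ω) ∂P).toReal := by
    rw [integral_neg, hDval]
  rw [hval] at hmain
  refine hmain.congr' ?_
  filter_upwards [self_mem_nhdsWithin] with t (ht : t ∈ Set.Ioi (0:ℝ))
  rw [slope_def_field, sub_zero, hl t, hl 0]
  have : (fun ω => (negExp (A ω + ENNReal.ofReal (0:ℝ) * B ω)).toReal)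
      = fun ω => (negExp (A ω)).toReal := by
    funext ω; rw [h00]
  rw [this, integral_div, integral_sub (hφint t) hφ0int]
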